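/- One-step-ahead predictive distribution: under the same HMM as in the filtering theorem, for each t = 1,...,T−1, p(z_{t+1} | τ_{1:t}) ∝ Σ_k N_N(z_{t+1} | μ̃_k, I_N) q_{k,t+1}(A_{1:t}), i.e., the predictive density of the next latent state given the ranks observed so far is proportional to a finite mixture of N-dimensional Gaussians with means μ̃_k. -/
import Mathlib


open Set MeasureTheory

/-- The N-dimensional Gaussian density with mean μ and identity covariance. -/
noncomputable def gaussPdf (N : ℕ) (μ z : Fin N → ℝ) : ℝ :=
  (2 * Real.pi) ^ (-(N : ℝ) / 2) * Real.exp (-(∑ i, (z i - μ i) ^ 2) / 2)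

/-- The order cone of a permutation τ. -/
def orderCone (N : ℕ) (τ : Equiv.Perm (Fin N)) : Set (Fin N → ℝ) :=
  {z | ∀ i j, z i < z j ↔ τ i < τ j}

/-- Product cell C_k = C_{k_1} × ... × C_{k_N} of a multi-index k. -/
def cellProd (N K : ℕ) (C : Fin K → Set ℝ) (k : Fin N → Fin K) : Set (Fin N → ℝ) :=
  {z | ∀ i, z i ∈ C (k i)}

lemma gauss1d_integrable (a : ℝ) :
    Integrable (fun x : ℝ => (2 * Real.pi) ^ (-(1:ℝ)/2) * Real.exp (-(x - a)^2/2)) := by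
  have h0 : Integrable (fun x : ℝ => Real.exp (-(1/2 : ℝ) * x ^ 2)) :=
    integrable_exp_neg_mul_sq (by norm_num)
  have h2 : Integrable (fun x : ℝ => Real.exp (-(1/2 : ℝ) * (x - a) ^ 2)) := h0.comp_sub_right a
  have h3 : (fun x : ℝ => Real.exp (-(x - a)^2/2)) = fun x => Real.exp (-(1/2:ℝ) * (x - a)^2) := by
    funext x; congr 1; ring
  exact (h3 ▸ h2).const_mul _

lemma gaussPdf_eq_prod (N : ℕ) (μ : Fin N → ℝ) :
    gaussPdf N μ = fun z => ∏ i, ((2 * Real.pi) ^ (-(1:ℝ)/2) * Real.exp (-(z i - μ i)^2/2)) := by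
  funext z
  unfold gaussPdf
  rw [Finset.prod_mul_distrib, Finset.prod_const, ← Real.exp_sum, Finset.card_univ,
    Fintype.card_fin]
  congr 1
  · rw [← Real.rpow_natCast ((2 * Real.pi) ^ (-(1:ℝ)/2)) N, ← Real.rpow_mul (by positivity)]
    congr 1; ring
  · congr 1
    rw [← Finset.sum_div, Finset.sum_neg_distrib, neg_div]

lemma gaussPdf_integrable (N : ℕ) (μ : Fin N → ℝ) : Integrable (gaussPdf N μ) := by
  rw [gaussPdf_eq_prod]
  exact Integrable.fintype_prod fun i => gauss1d_integrable (μ i)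

/-- one-step-ahead predictive distribution.  Under the same HMM
as in the filtering theorem, for each t = 1,...,T-1 the (unnormalized)
predictive density of z_{t+1} given the ranks τ_{1:t}, namely
∫ N(z_{t+1} | f(z'), I_N) α_t(z') dz', is proportional to the finite Gaussian
mixture Σ_k N(z_{t+1} | μ̃_k, I_N) q_{k,t+1}. -/
theorem stmt_12 (N K : ℕ) (hN : 0 < N) (hK : 0 < K)
    (C : Fin K → Set ℝ)
    (hCmeas : ∀ k, MeasurableSet (C k))
    (hCdisj : ∀ k k' : Fin K, k ≠ k' → Disjoint (C k) (C k'))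
    (hCcover : (⋃ k, C k) = Set.univ)
    (μt : Fin K → ℝ)
    (f : (Fin N → ℝ) → (Fin N → ℝ))
    (hf : ∀ (z : Fin N → ℝ) (i : Fin N) (k : Fin K), z i ∈ C k → f z i = μt k)
    (τ : ℕ → Equiv.Perm (Fin N))
    (A : ℕ → Set (Fin N → ℝ))
    (hA : ∀ t, A t = orderCone N (τ t))
    (zprior : Fin N → ℝ)
    (α : ℕ → (Fin N → ℝ) → ℝ)
    (q : ℕ → (Fin N → Fin K) → ℝ)
    (hα1 : ∀ z, α 1 z =
      (A 1).indicator (fun z => ∫ z0, gaussPdf N (f z0) z * gaussPdf N zprior z0) z)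
    (hαs : ∀ t, 1 ≤ t → ∀ z, α (t + 1) z =
      (A (t + 1)).indicator (fun z => ∫ z', gaussPdf N (f z') z * α t z') z)
    (hq1 : ∀ k, q 1 k = ∫ z0 in cellProd N K C k, gaussPdf N zprior z0)
    (hqs : ∀ t, 1 ≤ t → ∀ k, q (t + 1) k =
      ∑ m : Fin N → Fin K, q t m *
        ∫ z in (cellProd N K C k ∩ A t), gaussPdf N (fun i => μt (m i)) z) :
    ∀ (T : ℕ) (t : ℕ), 1 ≤ t → t < T → ∃ c > 0, ∀ z : Fin N → ℝ,
      (∫ z', gaussPdf N (f z') z * α t z') =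
      c * ∑ k : Fin N → Fin K, gaussPdf N (fun i => μt (k i)) z * q (t + 1) k := by
  -- measurability of cells
  have hcellmeas : ∀ k : Fin N → Fin K, MeasurableSet (cellProd N K C k) := by
    intro k
    have : cellProd N K C k = ⋂ i, (fun z : Fin N → ℝ => z i) ⁻¹' C (k i) := by
      ext z; simp [cellProd]
    rw [this]
    exact MeasurableSet.iInter fun i => (measurable_pi_apply i) (hCmeas (k i))
  -- measurability of order cones
  have hAmeas : ∀ t, MeasurableSet (A t) := by
    intro t; rw [hA]
    have : orderCone N (τ t) = ⋂ i, ⋂ j, {z : Fin N → ℝ | z i < z j ↔ τ t i < τ t j} := by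
      ext z; simp [orderCone]
    rw [this]
    refine MeasurableSet.iInter fun i => MeasurableSet.iInter fun j => ?_
    by_cases h : τ t i < τ t j
    · simp only [h, iff_true]
      exact measurableSet_lt (measurable_pi_apply i) (measurable_pi_apply j)
    · simp only [h, iff_false, not_lt]
      exact measurableSet_le (measurable_pi_apply j) (measurable_pi_apply i)
  -- cells partition the space
  have hpart : ∀ z : Fin N → ℝ, ∃! k : Fin N → Fin K, z ∈ cellProd N K C k := by
    intro z
    have hex : ∀ i, ∃ k : Fin K, z i ∈ C k := by
      intro i
      have : z i ∈ ⋃ k, C k := by rw [hCcover]; trivial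
      simpa using this
    choose g hg using hex
    refine ⟨g, hg, ?_⟩
    intro k hk
    funext i
    by_contra hne
    exact Set.disjoint_left.mp (hCdisj (k i) (g i) hne) (hk i) (hg i)
  -- pointwise decomposition of an indicator integrand into cells
  have hdecomp : ∀ (S : Set (Fin N → ℝ)) (h : (Fin N → ℝ) → ℝ) (z z0 : Fin N → ℝ),
      S.indicator (fun z0 => gaussPdf N (f z0) z * h z0) z0 =
      ∑ k : Fin N → Fin K,
        (cellProd N K C k ∩ S).indicator
          (fun z0 => gaussPdf N (fun i => μt (k i)) z * h z0) z0 := by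
    intro S h z z0
    obtain ⟨k0, hk0, huniq⟩ := hpart z0
    rw [Finset.sum_eq_single_of_mem k0 (Finset.mem_univ _)]
    · have hfz : f z0 = fun i => μt (k0 i) := funext fun i => hf z0 i (k0 i) (hk0 i)
      by_cases hS : z0 ∈ S
      · rw [Set.indicator_of_mem hS, Set.indicator_of_mem (Set.mem_inter hk0 hS), hfz]
      · rw [Set.indicator_of_notMem hS,
          Set.indicator_of_notMem (fun hmem => hS hmem.2)]
    · intro k _ hk
      refine Set.indicator_of_notMem (fun hmem => hk (huniq k hmem.1)) _
  -- integral splitting lemma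
  have hsplit : ∀ (S : Set (Fin N → ℝ)) (_ : MeasurableSet S) (h : (Fin N → ℝ) → ℝ)
      (_ : Integrable h) (z : Fin N → ℝ),
      ∫ z0 in S, gaussPdf N (f z0) z * h z0 =
      ∑ k : Fin N → Fin K,
        gaussPdf N (fun i => μt (k i)) z * ∫ z0 in cellProd N K C k ∩ S, h z0 := by
    intro S hS h hh z
    rw [← integral_indicator hS]
    have : (S.indicator fun z0 => gaussPdf N (f z0) z * h z0) =
        fun z0 => ∑ k : Fin N → Fin K,
          (cellProd N K C k ∩ S).indicator
            (fun z0 => gaussPdf N (fun i => μt (k i)) z * h z0) z0 :=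
      funext fun z0 => hdecomp S h z z0
    rw [this, integral_finset_sum]
    · refine Finset.sum_congr rfl fun k _ => ?_
      rw [integral_indicator ((hcellmeas k).inter hS), integral_const_mul]
    · intro k _
      rw [integrable_indicator_iff ((hcellmeas k).inter hS)]
      exact (hh.const_mul _).integrableOn
  -- integrability of the mixture
  have hmixInt : ∀ t : ℕ, Integrable
      (fun z' => ∑ m : Fin N → Fin K, gaussPdf N (fun i => μt (m i)) z' * q t m) :=
    fun t => integrable_finset_sum _ fun m _ => (gaussPdf_integrable N _).mul_const _
  -- the inner computation
  have hinner : ∀ t : ℕ, 1 ≤ t →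
      (∀ z', α t z' = (A t).indicator
        (fun z' => ∑ m : Fin N → Fin K, gaussPdf N (fun i => μt (m i)) z' * q t m) z') →
      ∀ z : Fin N → ℝ, (∫ z', gaussPdf N (f z') z * α t z') =
        ∑ k : Fin N → Fin K, gaussPdf N (fun i => μt (k i)) z * q (t + 1) k := by
    intro t ht hkt z
    have h1 : (fun z' => gaussPdf N (f z') z * α t z') =
        (A t).indicator (fun z' => gaussPdf N (f z') z *
          ∑ m : Fin N → Fin K, gaussPdf N (fun i => μt (m i)) z' * q t m) := by
      funext z'
      rw [hkt z']
      by_cases hz' : z' ∈ A t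
      · rw [Set.indicator_of_mem hz', Set.indicator_of_mem hz']
      · rw [Set.indicator_of_notMem hz', Set.indicator_of_notMem hz', mul_zero]
    rw [h1, integral_indicator (hAmeas t),
      hsplit (A t) (hAmeas t) _ (hmixInt t) z]
    refine Finset.sum_congr rfl fun k _ => ?_
    congr 1
    rw [hqs t ht k, integral_finset_sum]
    · refine Finset.sum_congr rfl fun m _ => ?_
      rw [integral_mul_const, mul_comm]
    · intro m _
      exact ((gaussPdf_integrable N _).mul_const _).integrableOn
  -- the key invariant for α
  have hkey : ∀ t : ℕ, 1 ≤ t → ∀ z', α t z' = (A t).indicator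
      (fun z' => ∑ m : Fin N → Fin K, gaussPdf N (fun i => μt (m i)) z' * q t m) z' := by
    intro t
    induction t with
    | zero => intro h; omega
    | succ n ih =>
      intro _
      rcases Nat.eq_or_lt_of_le (Nat.one_le_iff_ne_zero.mpr (Nat.succ_ne_zero n)) with h1 | h1
      · -- n = 0, base case t = 1
        have hn : n = 0 := by omega
        subst hn
        intro z'
        rw [hα1 z']
        congr 1
        funext z''
        have := hsplit Set.univ MeasurableSet.univ (gaussPdf N zprior)
          (gaussPdf_integrable N zprior) z''
        rw [← setIntegral_univ, this]
        refine Finset.sum_congr rfl fun m _ => ?_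
        rw [Set.inter_univ, ← hq1 m]
      · -- n ≥ 1, inductive step
        have hn : 1 ≤ n := by omega
        intro z'
        rw [hαs n hn z']
        congr 1
        funext z''
        rw [hinner n hn (ih hn) z'']
  intro T t ht _
  exact ⟨1, one_pos, fun z => by rw [hinner t ht (hkey t ht), one_mul]⟩
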